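/- The variance Var(T) = α^{1/T}(1−α)^{1/T} / (α^{1/T} + (1−α)^{1/T})² of the temperature-scaled Bernoulli decision is monotonically non-decreasing in T on (0, ∞); specifically its derivative with respect to T is nonnegative for all T > 0 and all α ∈ (0,1). -/
import Mathlib


open Real

/-- The derivative of the temperature-scaled Bernoulli variance
Var(T) = α^{1/T}(1−α)^{1/T}/(α^{1/T}+(1−α)^{1/T})² is nonnegative for all T > 0, α ∈ (0,1). -/
theorem variance_deriv_nonneg (α : ℝ) (hα₀ : 0 < α) (hα₁ : α < 1) (T : ℝ) (hT : 0 < T) :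
    0 ≤ deriv (fun T : ℝ =>
      α ^ (1 / T) * (1 - α) ^ (1 / T) / (α ^ (1 / T) + (1 - α) ^ (1 / T)) ^ 2) T := by
  have h1α : 0 < 1 - α := by linarith
  set a : ℝ := Real.log α with ha
  set b : ℝ := Real.log (1 - α) with hb
  set A : ℝ := α ^ (1 / T) with hA'
  set B : ℝ := (1 - α) ^ (1 / T) with hB'
  have hApos : 0 < A := Real.rpow_pos_of_pos hα₀ _
  have hBpos : 0 < B := Real.rpow_pos_of_pos h1α _
  have hu : HasDerivAt (fun T : ℝ => 1 / T) (-(1 / T ^ 2)) T := by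
    simpa [one_div] using hasDerivAt_inv hT.ne'
  have hA : HasDerivAt (fun T : ℝ => α ^ (1 / T)) (A * a * -(1 / T ^ 2)) T :=
    (Real.hasStrictDerivAt_const_rpow hα₀ (1 / T)).hasDerivAt.comp T hu
  have hB : HasDerivAt (fun T : ℝ => (1 - α) ^ (1 / T)) (B * b * -(1 / T ^ 2)) T :=
    (Real.hasStrictDerivAt_const_rpow h1α (1 / T)).hasDerivAt.comp T hu
  have hN : HasDerivAt (fun T : ℝ => α ^ (1 / T) * (1 - α) ^ (1 / T))
      (A * a * -(1 / T ^ 2) * B + A * (B * b * -(1 / T ^ 2))) T := hA.mul hB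
  have hD : HasDerivAt (fun T : ℝ => (α ^ (1 / T) + (1 - α) ^ (1 / T)) ^ 2)
      (2 * (A + B) ^ 1 * (A * a * -(1 / T ^ 2) + B * b * -(1 / T ^ 2))) T :=
    (hA.add hB).pow 2
  have hDne : (A + B) ^ 2 ≠ 0 := by positivity
  have hf : HasDerivAt (fun T : ℝ =>
      α ^ (1 / T) * (1 - α) ^ (1 / T) / (α ^ (1 / T) + (1 - α) ^ (1 / T)) ^ 2)
      (((A * a * -(1 / T ^ 2) * B + A * (B * b * -(1 / T ^ 2))) * (A + B) ^ 2 -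
        A * B * (2 * (A + B) ^ 1 * (A * a * -(1 / T ^ 2) + B * b * -(1 / T ^ 2)))) /
        ((A + B) ^ 2) ^ 2) T := hN.div hD hDne
  rw [hf.deriv]
  have key : 0 ≤ (a - b) * (A - B) := by
    rcases le_total α (1 - α) with h | h
    · have h1 : a ≤ b := Real.log_le_log hα₀ h
      have h2 : A ≤ B := Real.rpow_le_rpow hα₀.le h (by positivity)
      nlinarith
    · have h1 : b ≤ a := Real.log_le_log h1α h
      have h2 : B ≤ A := Real.rpow_le_rpow h1α.le h (by positivity)
      exact mul_nonneg (by linarith) (by linarith)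
  have hnum : (A * a * -(1 / T ^ 2) * B + A * (B * b * -(1 / T ^ 2))) * (A + B) ^ 2 -
      A * B * (2 * (A + B) ^ 1 * (A * a * -(1 / T ^ 2) + B * b * -(1 / T ^ 2)))
      = A * B * (1 / T ^ 2) * ((a - b) * (A - B)) * (A + B) := by ring
  rw [hnum]
  positivity
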